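/- (Bottom layer with dishonest primary after an honest node.) Let ζ ++ [p] be a route of depth f where p is dishonest and the primary of ζ is honest, and set m1 = w(ζ, p). Assume the honest backups of ζ ++ [p] strictly outnumber its dishonest backups. Then for every adversary assignment (w, u) satisfying (A1)-(A4) and every honest backup i of ζ ++ [p], one has g(ζ ++ [p], i) = m1. -/

import Mathlib

namespace QBA

/-- The majority function: returns the element of `M` occurring most often in `L`,
with ties broken by taking the least such element in the linear order,
and returning the default `d` on the empty list. -/
def maj {M : Type*} [LinearOrder M] (d : M) (L : List M) : M :=
  let s := L.toFinset.filter fun m => ∀ m' ∈ L.toFinset, L.count m' ≤ L.count m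
  if h : s.Nonempty then s.min' h else d


theorem maj_eq {M : Type*} [LinearOrder M] (d m : M) (L : List M)
    (hm : m ∈ L) (h : ∀ m', m' ≠ m → L.count m' < L.count m) :
    maj d L = m := by
  unfold maj
  simp only []
  set s := L.toFinset.filter fun x => ∀ m' ∈ L.toFinset, L.count m' ≤ L.count x with hs
  have hms : m ∈ s := by
    rw [hs, Finset.mem_filter]
    refine ⟨List.mem_toFinset.2 hm, fun m' _ => ?_⟩
    rcases eq_or_ne m' m with rfl | hne
    · exact le_refl _
    · exact (h m' hne).le
  have hne : s.Nonempty := ⟨m, hms⟩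
  rw [dif_pos hne]
  have hmem := Finset.min'_mem s hne
  replace hmem := (Finset.mem_filter.1 hmem).2
  by_contra hc
  exact absurd (hmem m (List.mem_toFinset.2 hm)) (not_le.2 (h _ hc))

/-- A route: a list of pairwise distinct players with head `S`
and length (depth) between `1` and `f`.  Its primary is its last entry,
and its backups are the players not occurring in it. -/
def IsRoute (n f : ℕ) (S : Fin n) (ζ : List (Fin n)) : Prop :=
  ζ.Nodup ∧ ζ.head? = some S ∧ 1 ≤ ζ.length ∧ ζ.length ≤ f

/-- The primary (last entry) of `ζ` is honest (not in `D`). -/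
def HonestPrimary {n : ℕ} (D : Finset (Fin n)) (ζ : List (Fin n)) : Prop :=
  ∀ q ∈ ζ.getLast?, q ∉ D

/-- An adversary assignment `(w, u)`: `w ζ i` is the message backup `i` accepts from
`ζ`'s primary, `u ζ j i` the message forwarder `j` forwards to verifier `i`,
subject to conditions (A1)–(A4). -/
structure Adversary (n f : ℕ) (S : Fin n) (D : Finset (Fin n)) (M : Type*) where
  w : List (Fin n) → Fin n → M
  u : List (Fin n) → Fin n → Fin n → M
  A1 : ∀ ζ : List (Fin n), IsRoute n f S ζ → HonestPrimary D ζ →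
    ∀ i i' : Fin n, i ∉ ζ → i' ∉ ζ → w ζ i = w ζ i'
  A2 : ∀ (ζ : List (Fin n)) (p : Fin n), IsRoute n f S ζ → p ∉ ζ → p ∉ D →
    IsRoute n f S (ζ ++ [p]) → ∀ i : Fin n, i ∉ ζ ++ [p] → w (ζ ++ [p]) i = w ζ p
  A3 : ∀ (ζ : List (Fin n)) (p : Fin n), IsRoute n f S ζ → HonestPrimary D ζ →
    p ∉ ζ → p ∈ D → IsRoute n f S (ζ ++ [p]) →
    ∀ i : Fin n, i ∉ ζ ++ [p] → i ∉ D → w (ζ ++ [p]) i = w ζ p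
  A4 : ∀ (ζ : List (Fin n)) (j i : Fin n), IsRoute n f S ζ → j ∉ ζ → i ∉ ζ → i ≠ j →
    (j ∉ D ∨ HonestPrimary D ζ) → u ζ j i = w ζ j

/-- Fuel-indexed gathering value; for a route `ζ` the fuel is `f - ζ.length`, so fuel `0`
corresponds to the bottom layer `ζ.length = f`. -/
def gAux {n f : ℕ} {S : Fin n} {D : Finset (Fin n)} {M : Type*} [LinearOrder M] [Inhabited M]
    (A : Adversary n f S D M) : ℕ → List (Fin n) → Fin n → M
  | 0, ζ, i =>
      maj default (A.w ζ i ::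
        (((List.finRange n).filter fun j => decide (j ∉ ζ ∧ j ≠ i)).map fun j => A.u ζ j i))
  | k + 1, ζ, i =>
      maj default (((List.finRange n).filter fun j => decide (j ∉ ζ)).map
        fun j => if j = i then A.w ζ i else gAux A k (ζ ++ [j]) i)

/-- The gathering value `g(ζ, i)` of an honest backup `i` of the route `ζ`,
defined by downward recursion on depth: at the bottom layer `ζ.length = f` it is the
majority of `w(ζ, i)` together with `u(ζ, j, i)` over all backups `j ≠ i` of `ζ`;
above the bottom layer it is the majority, over all backups `j` of `ζ`, of
`g(ζ ++ [j], i)` (where the `j = i` entry is `w(ζ, i)`). -/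
def g {n f : ℕ} {S : Fin n} {D : Finset (Fin n)} {M : Type*} [LinearOrder M] [Inhabited M]
    (A : Adversary n f S D M) (ζ : List (Fin n)) (i : Fin n) : M :=
  gAux A (f - ζ.length) ζ i

theorem length_filter_finRange {n : ℕ} (P : Fin n → Prop) [DecidablePred P] :
    ((List.finRange n).filter fun j => decide (P j)).length = (Finset.univ.filter P).card := by
  rw [Finset.card, Finset.filter_val, Fin.univ_def]
  simp [Multiset.filter_coe]

/-- **Bottom layer with dishonest primary after an honest node.** Let `ζ ++ [p]` be a
route of depth `f` where `p` is dishonest and the primary of `ζ` is honest, and set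
`m1 = w(ζ, p)`.  Assume the honest backups of `ζ ++ [p]` strictly outnumber its
dishonest backups.  Then for every adversary assignment `(w, u)` satisfying (A1)–(A4)
and every honest backup `i` of `ζ ++ [p]`, one has `g(ζ ++ [p], i) = m1 = w(ζ, p)`. -/
theorem bottom_layer_dishonest_primary
    {n f : ℕ} {S : Fin n} {D : Finset (Fin n)} {M : Type*} [LinearOrder M] [Inhabited M]
    (A : Adversary n f S D M) (ζ : List (Fin n)) (p : Fin n)
    (hζ : IsRoute n f S ζ) (hprim : HonestPrimary D ζ) (hpD : p ∈ D)
    (hroute : IsRoute n f S (ζ ++ [p])) (hlen : (ζ ++ [p]).length = f)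
    (hmaj : (Finset.univ.filter fun j : Fin n => j ∉ ζ ++ [p] ∧ j ∈ D).card <
            (Finset.univ.filter fun j : Fin n => j ∉ ζ ++ [p] ∧ j ∉ D).card)
    (i : Fin n) (hi : i ∉ ζ ++ [p]) (hiH : i ∉ D) :
    g A (ζ ++ [p]) i = A.w ζ p := by
  set ζ' := ζ ++ [p] with hζ'
  set m := A.w ζ p with hmdef
  have hpζ : p ∉ ζ := by
    have := hroute.1
    rw [List.nodup_append] at this
    intro hc
    exact this.2.2 p hc p (List.mem_singleton_self p) rfl
  -- key message facts
  have ha : A.w ζ' i = m := A.A3 ζ p hζ hprim hpζ hpD hroute i hi hiH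
  have hval : ∀ j : Fin n, j ∉ ζ' → j ≠ i → j ∉ D → A.u ζ' j i = m := by
    intro j hj hji hjD
    have h4 : A.u ζ' j i = A.w ζ' j :=
      A.A4 ζ' j i hroute hj hi (fun h => hji h.symm) (Or.inl hjD)
    rw [h4]
    exact A.A3 ζ p hζ hprim hpζ hpD hroute j hj hjD
  -- unfold g to the bottom layer
  have h0 : f - ζ'.length = 0 := by rw [hlen]; exact Nat.sub_self f
  rw [g, h0]
  show maj default (A.w ζ' i ::
      (((List.finRange n).filter fun j => decide (j ∉ ζ' ∧ j ≠ i)).map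
        fun j => A.u ζ' j i)) = m
  rw [ha]
  set lst := (List.finRange n).filter fun j => decide (j ∉ ζ' ∧ j ≠ i) with hlst
  set rest := lst.map fun j => A.u ζ' j i with hrest
  have hmemlst : ∀ j ∈ lst, j ∉ ζ' ∧ j ≠ i := by
    intro j hj
    rw [hlst, List.mem_filter] at hj
    exact of_decide_eq_true hj.2
  -- count bounds
  have hDC : List.countP (fun j => decide (j ∈ D)) lst =
      (Finset.univ.filter fun j : Fin n => (j ∉ ζ' ∧ j ≠ i) ∧ j ∈ D).card := by
    rw [List.countP_eq_length_filter, hlst, List.filter_filter,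
      ← length_filter_finRange (fun j : Fin n => (j ∉ ζ' ∧ j ≠ i) ∧ j ∈ D)]
    congr 1
    apply List.filter_congr
    intro x _
    simp [Bool.and_comm, Bool.and_left_comm, Bool.and_assoc]
  have hHC : List.countP (fun j => decide (j ∉ D)) lst =
      (Finset.univ.filter fun j : Fin n => (j ∉ ζ' ∧ j ≠ i) ∧ j ∉ D).card := by
    rw [List.countP_eq_length_filter, hlst, List.filter_filter,
      ← length_filter_finRange (fun j : Fin n => (j ∉ ζ' ∧ j ≠ i) ∧ j ∉ D)]
    congr 1
    apply List.filter_congr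
    intro x _
    simp [Bool.and_comm, Bool.and_left_comm, Bool.and_assoc]
  -- relate finset cards
  have hDeq : (Finset.univ.filter fun j : Fin n => (j ∉ ζ' ∧ j ≠ i) ∧ j ∈ D) =
      (Finset.univ.filter fun j : Fin n => j ∉ ζ' ∧ j ∈ D) := by
    apply Finset.filter_congr
    intro x _
    constructor
    · rintro ⟨⟨h1, _⟩, h2⟩; exact ⟨h1, h2⟩
    · rintro ⟨h1, h2⟩; exact ⟨⟨h1, fun hxi => hiH (hxi ▸ h2)⟩, h2⟩
  have hHeq : (Finset.univ.filter fun j : Fin n => (j ∉ ζ' ∧ j ≠ i) ∧ j ∉ D) =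
      (Finset.univ.filter fun j : Fin n => j ∉ ζ' ∧ j ∉ D).erase i := by
    ext x
    simp only [Finset.mem_filter, Finset.mem_erase, Finset.mem_univ, true_and]
    tauto
  have hiHset : i ∈ Finset.univ.filter fun j : Fin n => j ∉ ζ' ∧ j ∉ D := by
    simp [hi, hiH]
  have hHcard : (Finset.univ.filter fun j : Fin n => (j ∉ ζ' ∧ j ≠ i) ∧ j ∉ D).card + 1 =
      (Finset.univ.filter fun j : Fin n => j ∉ ζ' ∧ j ∉ D).card := by
    rw [hHeq, Finset.card_erase_of_mem hiHset]
    have := Finset.card_pos.2 ⟨i, hiHset⟩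
    omega
  -- majority counts
  have hcount_m : (Finset.univ.filter fun j : Fin n => j ∉ ζ' ∧ j ∉ D).card ≤
      List.count m (m :: rest) := by
    rw [List.count_cons_self, ← hHcard]
    have : List.countP (fun j => decide (j ∉ D)) lst ≤ List.count m rest := by
      rw [hrest, List.count_eq_countP, List.countP_map]
      apply List.countP_mono_left
      intro j hj hjD
      have hj' := hmemlst j hj
      have := hval j hj'.1 hj'.2 (of_decide_eq_true hjD)
      simp [Function.comp, this]
    omega
  have hcount_ne : ∀ m', m' ≠ m → List.count m' (m :: rest) ≤
      (Finset.univ.filter fun j : Fin n => j ∉ ζ' ∧ j ∈ D).card := by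
    intro m' hm'
    rw [List.count_cons_of_ne hm'.symm]
    rw [← hDeq, ← hDC, hrest, List.count_eq_countP, List.countP_map]
    apply List.countP_mono_left
    intro j hj hjm'
    have hj' := hmemlst j hj
    by_contra hjD
    have hjD' : j ∉ D := fun h => hjD (decide_eq_true h)
    have := hval j hj'.1 hj'.2 hjD'
    simp only [Function.comp, this] at hjm'
    exact hm' (eq_of_beq hjm').symm
  apply maj_eq
  · exact List.mem_cons_self
  · intro m' hm'
    calc List.count m' (m :: rest) ≤ _ := hcount_ne m' hm'
    _ < _ := hmaj
    _ ≤ _ := hcount_m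

end QBA
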